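/- Let n ≥ 7 be an integer with n ≡ 3 (mod 4) and let g(X) = Σ_{i=0}^{n−2} (i+1)X^i (a polynomial of degree n−2 with leading coefficient n−1). Then g has n−2 distinct roots r_1,…,r_{n−2} in ℂ, and its discriminant satisfies (n−1)^{2n−6} · ∏_{1≤i<j≤n−2} (r_i − r_j)² = 2 · n^{n−3} · (n−1)^{n−4}. -/

import Mathlib

open Polynomial Finset

private lemma aux_mul (k : ℕ) :
    (X - 1) ^ 2 * (∑ i ∈ range k, C ((i : ℂ) + 1) * X ^ i) =
      C (k : ℂ) * X ^ (k + 1) - C ((k : ℂ) + 1) * X ^ k + 1 := by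
  induction k with
  | zero => simp
  | succ k ih =>
    rw [sum_range_succ, mul_add, ih]
    push_cast
    simp only [C_add, C_1]
    ring

private lemma aux_sum (m : ℕ) :
    2 * ∑ i ∈ range m, ((i : ℂ) + 1) = (m : ℂ) * ((m : ℂ) + 1) := by
  induction m with
  | zero => simp
  | succ m ih =>
    rw [sum_range_succ, mul_add, ih]
    push_cast
    ring

private lemma derivative_finset_prod {ι : Type*} [DecidableEq ι] (s : Finset ι) (f : ι → ℂ[X]) :
    derivative (∏ i ∈ s, f i) = ∑ i ∈ s, (∏ j ∈ s.erase i, f j) * derivative (f i) := by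
  induction s using Finset.induction with
  | empty => simp
  | @insert a s ha ih =>
    rw [Finset.prod_insert ha, derivative_mul, ih, Finset.sum_insert ha, Finset.erase_insert ha]
    have h1 : ∀ i ∈ s, (∏ j ∈ (insert a s).erase i, f j) * derivative (f i) =
        f a * ((∏ j ∈ s.erase i, f j) * derivative (f i)) := by
      intro i hi
      rw [Finset.erase_insert_of_ne (by rintro rfl; exact ha hi),
        Finset.prod_insert (fun h => ha (Finset.mem_of_mem_erase h))]
      ring
    rw [Finset.sum_congr rfl h1, ← Finset.mul_sum]
    ring

private lemma offdiag_prod (m : ℕ) (hEven : Even (∑ i ∈ range m, i)) (r : Fin m → ℂ) :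
    ∏ i : Fin m, ∏ j ∈ Finset.univ.erase i, (r i - r j) =
      ∏ i : Fin m, ∏ j ∈ Finset.Ioi i, (r i - r j) ^ 2 := by
  have herase : ∀ i : Fin m, Finset.univ.erase i = Finset.Ioi i ∪ Finset.Iio i := by
    intro i
    ext j
    simp only [Finset.mem_erase, Finset.mem_univ, and_true, Finset.mem_union, Finset.mem_Ioi,
      Finset.mem_Iio]
    exact ⟨fun h => h.lt_or_gt.symm.imp id id, fun h => h.elim (fun h' => h'.ne') fun h' => h'.ne⟩
  have hdisj : ∀ i : Fin m, Disjoint (Finset.Ioi i) (Finset.Iio i) := by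
    intro i
    exact Finset.disjoint_left.mpr fun j hj hj' =>
      absurd (Finset.mem_Iio.mp hj') (not_lt_of_gt (Finset.mem_Ioi.mp hj))
  calc ∏ i : Fin m, ∏ j ∈ Finset.univ.erase i, (r i - r j)
      = ∏ i : Fin m, ((∏ j ∈ Finset.Ioi i, (r i - r j)) * ∏ j ∈ Finset.Iio i, (r i - r j)) := by
        refine Finset.prod_congr rfl fun i _ => ?_
        rw [herase i, Finset.prod_union (hdisj i)]
    _ = (∏ i : Fin m, ∏ j ∈ Finset.Ioi i, (r i - r j)) *
          ∏ i : Fin m, ∏ j ∈ Finset.Iio i, (r i - r j) := Finset.prod_mul_distrib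
    _ = (∏ i : Fin m, ∏ j ∈ Finset.Ioi i, (r i - r j)) *
          ∏ i : Fin m, ∏ j ∈ Finset.Ioi i, (r j - r i) := by
        congr 1
        exact Finset.prod_comm' fun x y => by
          simp only [Finset.mem_univ, true_and, and_true, Finset.mem_Iio, Finset.mem_Ioi]
    _ = ∏ i : Fin m, ∏ j ∈ Finset.Ioi i, ((r i - r j) * (r j - r i)) := by
        rw [← Finset.prod_mul_distrib]
        refine Finset.prod_congr rfl fun i _ => Finset.prod_mul_distrib.symm
    _ = ∏ i : Fin m, ∏ j ∈ Finset.Ioi i, ((-1) * (r i - r j) ^ 2) := by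
        refine Finset.prod_congr rfl fun i _ => Finset.prod_congr rfl fun j _ => by ring
    _ = ∏ i : Fin m, ∏ j ∈ Finset.Ioi i, (r i - r j) ^ 2 := by
        simp only [Finset.prod_mul_distrib, Finset.prod_const]
        rw [← Finset.prod_mul_distrib]
        have h1 : ∀ i : Fin m, ((-1 : ℂ)) ^ (Finset.Ioi i).card = (-1) ^ (m - 1 - (i : ℕ)) := by
          intro i; rw [Fin.card_Ioi]
        calc ∏ i : Fin m, ((-1 : ℂ)) ^ (Finset.Ioi i).card * ∏ j ∈ Finset.Ioi i, (r i - r j) ^ 2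
            = (∏ i : Fin m, ((-1 : ℂ)) ^ (m - 1 - (i : ℕ))) *
                ∏ i : Fin m, ∏ j ∈ Finset.Ioi i, (r i - r j) ^ 2 := by
              rw [← Finset.prod_mul_distrib]
              exact Finset.prod_congr rfl fun i _ => by rw [h1]
          _ = ∏ i : Fin m, ∏ j ∈ Finset.Ioi i, (r i - r j) ^ 2 := by
              rw [Fin.prod_univ_eq_prod_range (fun i => ((-1 : ℂ)) ^ (m - 1 - i)) m,
                Finset.prod_pow_eq_pow_sum, Finset.sum_range_reflect (fun i => i) m,
                hEven.neg_one_pow, one_mul]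

/-- Let `n ≥ 7` with `n ≡ 3 (mod 4)` and `g (X) = Σ_{i=0}^{n−2} (i+1) Xⁱ`
(degree `n − 2`, leading coefficient `n − 1`). Then `g` has `n − 2` distinct complex roots
`r 1, …, r (n−2)`, and its discriminant satisfies
`(n−1)^(2n−6) · ∏_{i<j} (r i − r j)² = 2 · n^(n−3) · (n−1)^(n−4)`. -/
theorem stmt13 (n : ℕ) (hn : 7 ≤ n) (hn3 : n % 4 = 3)
    (g : Polynomial ℂ) (hg : g = ∑ i ∈ range (n - 1), C ((i : ℂ) + 1) * X ^ i) :
    ∃ r : Fin (n - 2) → ℂ, Function.Injective r ∧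
      (∀ x : ℂ, g.IsRoot x ↔ ∃ i, r i = x) ∧
      ((n : ℂ) - 1) ^ (2 * n - 6) * (∏ i : Fin (n - 2), ∏ j ∈ Finset.Ioi i, (r i - r j) ^ 2) =
        2 * (n : ℂ) ^ (n - 3) * ((n : ℂ) - 1) ^ (n - 4) := by
  obtain ⟨k, rfl⟩ : ∃ k, n = 4 * k + 7 := ⟨(n - 7) / 4, by omega⟩
  simp only [show 4 * k + 7 - 2 = 4 * k + 5 from rfl, show 4 * k + 7 - 1 = 4 * k + 6 from rfl,
    show 2 * (4 * k + 7) - 6 = 8 * k + 8 from by omega,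
    show 4 * k + 7 - 3 = 4 * k + 4 from rfl, show 4 * k + 7 - 4 = 4 * k + 3 from rfl] at hg ⊢
  -- basic coefficient facts
  have hcast : ∀ i : ℕ, ((i : ℂ) + 1) ≠ 0 := fun i => by norm_cast
  have hAne : (4 * (k : ℂ) + 6) ≠ 0 := by
    intro h
    have h' : ((4 * k + 6 : ℕ) : ℂ) = 0 := by push_cast; linear_combination h
    have := Nat.cast_eq_zero.mp h'
    omega
  have hBne : (4 * (k : ℂ) + 7) ≠ 0 := by
    intro h
    have h' : ((4 * k + 7 : ℕ) : ℂ) = 0 := by push_cast; linear_combination h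
    have := Nat.cast_eq_zero.mp h'
    omega
  have hcoeff : ∀ i, g.coeff i = if i < 4 * k + 6 then (i : ℂ) + 1 else 0 := by
    intro i
    rw [hg, finset_sum_coeff]
    simp only [coeff_C_mul, coeff_X_pow, mul_ite, mul_one, mul_zero, Finset.sum_ite_eq,
      Finset.mem_range]
  have hne : g ≠ 0 := by
    intro h
    have h0 := hcoeff 0
    rw [h] at h0
    simp at h0
  have hdeg : g.natDegree = 4 * k + 5 := by
    apply le_antisymm
    · rw [natDegree_le_iff_coeff_eq_zero]
      intro i hi
      rw [hcoeff i, if_neg (by omega)]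
    · apply le_natDegree_of_ne_zero
      rw [hcoeff, if_pos (by omega)]
      exact hcast _
  have hlead : g.leadingCoeff = ((4 * k + 5 : ℕ) : ℂ) + 1 := by
    rw [Polynomial.leadingCoeff, hdeg, hcoeff, if_pos (by omega)]
  -- the key polynomial identity and derivative evaluation
  have hkey : (X - 1) ^ 2 * g =
      C ((4 * k + 6 : ℕ) : ℂ) * X ^ (4 * k + 7) - C (((4 * k + 6 : ℕ) : ℂ) + 1) * X ^ (4 * k + 6)
        + 1 := by
    rw [hg]; exact aux_mul (4 * k + 6)
  have hder_eval : ∀ z : ℂ, 2 * (z - 1) * g.eval z + (z - 1) ^ 2 * (derivative g).eval z =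
      ((4 * k + 6 : ℕ) : ℂ) * ((4 * k + 7 : ℕ) : ℂ) * z ^ (4 * k + 5) * (z - 1) := by
    intro z
    have h1 := congrArg (fun p => (derivative p).eval z) hkey
    simp only [derivative_mul, derivative_pow, derivative_sub, derivative_add, derivative_one,
      derivative_X, derivative_C_mul, derivative_X_pow, derivative_C, eval_add, eval_sub, eval_mul,
      eval_pow, eval_X, eval_C, eval_one, eval_natCast, eval_zero, pow_one, mul_one, mul_zero,
      add_zero, zero_add, zero_mul, sub_zero] at h1
    push_cast at h1 ⊢
    linear_combination h1
  -- special values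
  have hg0 : g.eval 0 = 1 := by
    rw [← Polynomial.coeff_zero_eq_eval_zero, hcoeff, if_pos (by omega)]
    norm_num
  have hg1 : 2 * g.eval 1 = ((4 * k + 6 : ℕ) : ℂ) * ((4 * k + 7 : ℕ) : ℂ) := by
    rw [hg]
    simp only [eval_finset_sum, eval_mul, eval_pow, eval_C, eval_X, one_pow, mul_one]
    rw [aux_sum (4 * k + 6)]
    push_cast
    ring
  have hg1ne : g.eval 1 ≠ 0 := by
    intro h
    rw [h, mul_zero] at hg1
    have : ((4 * k + 6 : ℕ) : ℂ) = 0 ∨ ((4 * k + 7 : ℕ) : ℂ) = 0 := mul_eq_zero.mp hg1.symm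
    rcases this with h' | h' <;> exact_mod_cast h'
  -- the roots are distinct
  have hnodup : g.roots.Nodup := by
    rw [Multiset.nodup_iff_count_le_one]
    intro x
    rw [count_roots]
    by_contra hcon
    push_neg at hcon
    have hroot : g.IsRoot x := by
      rw [← rootMultiplicity_pos hne]; omega
    have hd : (derivative g).IsRoot x := by
      have := isRoot_iterate_derivative_of_lt_rootMultiplicity (p := g) (t := x) (n := 1) hcon
      simpa using this
    have h1 := hder_eval x
    rw [hroot.eq_zero, hd.eq_zero] at h1
    simp only [mul_zero, zero_add] at h1
    have h2 : ((4 * k + 6 : ℕ) : ℂ) * ((4 * k + 7 : ℕ) : ℂ) * x ^ (4 * k + 5) * (x - 1) = 0 :=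
      h1.symm
    have hx01 : x = 0 ∨ x = 1 := by
      rcases mul_eq_zero.mp h2 with h3 | h3
      · rcases mul_eq_zero.mp h3 with h4 | h4
        · exfalso
          rcases mul_eq_zero.mp h4 with h5 | h5 <;> exact_mod_cast h5
        · left; exact pow_eq_zero_iff (by omega) |>.mp h4
      · right; exact sub_eq_zero.mp h3
    rcases hx01 with rfl | rfl
    · rw [IsRoot, hg0] at hroot; exact one_ne_zero hroot
    · rw [IsRoot] at hroot; exact hg1ne hroot
  -- enumerate the roots
  have hsplits : Splits g := IsAlgClosed.splits g
  have hcard : g.roots.card = 4 * k + 5 := by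
    rw [splits_iff_card_roots.mp hsplits, hdeg]
  set S : Finset ℂ := g.roots.toFinset with hSdef
  have hSval : S.val = g.roots := Multiset.dedup_eq_self.mpr hnodup
  have hScard : S.card = 4 * k + 5 := by
    rw [Finset.card, hSval, hcard]
  let e : Fin (4 * k + 5) ≃ {x // x ∈ S} := (S.equivFin.trans (finCongr hScard)).symm
  set r : Fin (4 * k + 5) → ℂ := fun i => (e i : ℂ) with hr
  have hinj : Function.Injective r := fun i j h => e.injective (Subtype.ext h)
  have hmem : ∀ x : ℂ, x ∈ S ↔ ∃ i, r i = x := by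
    intro x
    constructor
    · intro hx
      exact ⟨e.symm ⟨x, hx⟩, by simp [hr]⟩
    · rintro ⟨i, rfl⟩
      exact (e i).2
  have hiff : ∀ x : ℂ, g.IsRoot x ↔ ∃ i, r i = x := by
    intro x
    rw [← hmem, hSdef, Multiset.mem_toFinset, mem_roots hne]
  have htrans : ∀ {β : Type} [CommMonoid β] (f : ℂ → β),
      (g.roots.map f).prod = ∏ i : Fin (4 * k + 5), f (r i) := by
    intro β _ f
    rw [← hSval, ← Finset.prod_eq_multiset_prod, ← Finset.prod_coe_sort]
    exact (Equiv.prod_comp e (fun x : {x // x ∈ S} => f (x : ℂ))).symm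
  have hgfact : g = C (((4 * k + 5 : ℕ) : ℂ) + 1) * ∏ i : Fin (4 * k + 5), (X - C (r i)) := by
    conv_lhs => rw [hsplits.eq_prod_roots]
    rw [hlead, htrans]
  refine ⟨r, hinj, hiff, ?_⟩
  show (((4 * k + 7 : ℕ) : ℂ) - 1) ^ (8 * k + 8) *
      (∏ i : Fin (4 * k + 5), ∏ j ∈ Finset.Ioi i, (r i - r j) ^ 2) =
    2 * ((4 * k + 7 : ℕ) : ℂ) ^ (4 * k + 4) * (((4 * k + 7 : ℕ) : ℂ) - 1) ^ (4 * k + 3)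
  -- evaluation of g as a product
  have heval : ∀ z : ℂ, g.eval z = (((4 * k + 5 : ℕ) : ℂ) + 1) * ∏ i, (z - r i) := by
    intro z
    rw [hgfact]
    simp [eval_prod]
  have hroot : ∀ i, g.eval (r i) = 0 := fun i => (hiff (r i)).mpr ⟨i, rfl⟩
  have hr1 : ∀ i, r i ≠ 1 := by
    intro i h
    exact hg1ne (h ▸ hroot i)
  -- the derivative at each root
  have hgd : ∀ i, (derivative g).eval (r i) =
      (((4 * k + 5 : ℕ) : ℂ) + 1) * ∏ j ∈ Finset.univ.erase i, (r i - r j) := by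
    intro i
    rw [hgfact, derivative_C_mul, derivative_finset_prod]
    simp only [derivative_sub, derivative_X, derivative_C, sub_zero, mul_one, eval_mul, eval_C,
      eval_finset_sum, eval_prod, eval_sub, eval_X]
    congr 1
    rw [Finset.sum_eq_single i]
    · intro b _ hb
      exact Finset.prod_eq_zero (Finset.mem_erase.mpr ⟨hb.symm, Finset.mem_univ i⟩) (sub_self (r i))
    · intro h; exact absurd (Finset.mem_univ i) h
  -- step identity at each root
  have hstep : ∀ i, (r i - 1) * (derivative g).eval (r i) =
      (4 * (k : ℂ) + 6) * (4 * (k : ℂ) + 7) * (r i) ^ (4 * k + 5) := by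
    intro i
    have h1 := hder_eval (r i)
    rw [hroot i] at h1
    have h2 : r i - 1 ≠ 0 := sub_ne_zero.mpr (hr1 i)
    apply mul_left_cancel₀ h2
    push_cast at h1
    linear_combination h1
  -- products over all roots
  have hodd : Odd (4 * k + 5) := ⟨2 * k + 2, by ring⟩
  have hQ : (4 * (k : ℂ) + 6) * ∏ i, r i = -1 := by
    have h0 := heval 0
    rw [hg0] at h0
    have h1 : (∏ i : Fin (4 * k + 5), (0 - r i)) = (-1) ^ (4 * k + 5) * ∏ i, r i := by
      rw [Finset.prod_congr rfl fun (i : Fin (4 * k + 5)) _ =>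
        (show (0 : ℂ) - r i = -1 * r i by ring), Finset.prod_mul_distrib, Finset.prod_const,
        Finset.card_univ, Fintype.card_fin]
    rw [h1, hodd.neg_one_pow] at h0
    push_cast at h0
    linear_combination h0
  have hW : 2 * ∏ i, (r i - 1) = -(4 * (k : ℂ) + 7) := by
    have h0 := heval 1
    have h1 : (∏ i : Fin (4 * k + 5), ((1 : ℂ) - r i)) = (-1) ^ (4 * k + 5) * ∏ i, (r i - 1) := by
      rw [Finset.prod_congr rfl fun (i : Fin (4 * k + 5)) _ =>
        (show (1 : ℂ) - r i = -1 * (r i - 1) by ring), Finset.prod_mul_distrib,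
        Finset.prod_const, Finset.card_univ, Fintype.card_fin]
    rw [h1, hodd.neg_one_pow] at h0
    apply mul_left_cancel₀ hAne
    have h2 := hg1
    rw [h0] at h2
    push_cast at h2
    linear_combination -h2
  have hWG : (∏ i, (r i - 1)) * ∏ i, (derivative g).eval (r i) =
      ((4 * (k : ℂ) + 6) * (4 * (k : ℂ) + 7)) ^ (4 * k + 5) * (∏ i, r i) ^ (4 * k + 5) := by
    rw [← Finset.prod_mul_distrib, Finset.prod_congr rfl fun i _ => hstep i,
      Finset.prod_mul_distrib, Finset.prod_const, Finset.card_univ, Fintype.card_fin,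
      ← Finset.prod_pow]
  have hEv : Even (∑ i ∈ range (4 * k + 5), i) := by
    have h2 := Finset.sum_range_id_mul_two (4 * k + 5)
    have h3 : (4 * k + 5) * (4 * k + 5 - 1) = ((4 * k + 5) * (k + 1)) * 2 * 2 := by
      rw [show 4 * k + 5 - 1 = 4 * k + 4 from rfl]; ring
    rw [h3] at h2
    have h4 := Nat.eq_of_mul_eq_mul_right (show 0 < 2 by norm_num) h2
    exact ⟨(4 * k + 5) * (k + 1), by rw [h4]; ring⟩
  have hG : ∏ i, (derivative g).eval (r i) =
      (4 * (k : ℂ) + 6) ^ (4 * k + 5) *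
        ∏ i : Fin (4 * k + 5), ∏ j ∈ Finset.Ioi i, (r i - r j) ^ 2 := by
    rw [Finset.prod_congr rfl fun i _ => hgd i, Finset.prod_mul_distrib, Finset.prod_const,
      Finset.card_univ, Fintype.card_fin, offdiag_prod (4 * k + 5) hEv r]
    rw [show ((4 * k + 5 : ℕ) : ℂ) + 1 = 4 * (k : ℂ) + 6 by push_cast; ring]
  -- final assembly
  set D : ℂ := ∏ i : Fin (4 * k + 5), ∏ j ∈ Finset.Ioi i, (r i - r j) ^ 2 with hD
  have hQpow : (4 * (k : ℂ) + 6) ^ (4 * k + 5) * (∏ i, r i) ^ (4 * k + 5) = -1 := by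
    rw [← mul_pow, hQ, hodd.neg_one_pow]
  have hE : (∏ i, (r i - 1)) * ((4 * (k : ℂ) + 6) ^ (4 * k + 5) * D) =
      -((4 * (k : ℂ) + 7) ^ (4 * k + 5)) := by
    rw [← hG, hWG, mul_pow]
    linear_combination ((4 * (k : ℂ) + 7) ^ (4 * k + 5)) * hQpow
  have hkey2 : (4 * (k : ℂ) + 6) ^ (4 * k + 5) * D = 2 * (4 * (k : ℂ) + 7) ^ (4 * k + 4) := by
    apply mul_left_cancel₀ hBne
    linear_combination (-2 : ℂ) * hE + ((4 * (k : ℂ) + 6) ^ (4 * k + 5) * D) * hW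
  push_cast
  linear_combination ((4 * (k : ℂ) + 6) ^ (4 * k + 3)) * hkey2
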